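/- Let p ≥ 2 be a natural number, ε > 0, α ∈ (0,1), and t > 0. Define h(t,x) = 1 - (2ε)^{p-1}·(p-1)·t·(log(6/(x-t)))^{α(p-1)} for x with x - t ∈ (0,2), and let μ(t) = 6·exp(-((2ε)^{p-1}·(p-1)·t)^{-1/(α(p-1))}). Assume μ(t) < 2. Then: (i) ∂_x h(t,x) > 0 for all x with x - t ∈ (0,2); (ii) ∂²_x h(t,x) ≤ 0 for all x with x - t ∈ (0,2); (iii) h(t, t + μ(t)) = 0; and (iv) for all x with x - t ∈ (μ(t), 2), h(t,x) ≤ ∂_x h(t, t+μ(t)) · (x - t - μ(t)). -/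

import Mathlib

open Set

private lemma logL_gt_one {t x : ℝ} (hx : x ∈ Set.Ioo t (t + 2)) :
    1 < Real.log (6 / (x - t)) := by
  have hs : 0 < x - t := by have := hx.1; linarith
  have hs2 : x - t < 2 := by have := hx.2; linarith
  have h3 : (3 : ℝ) < 6 / (x - t) := by
    rw [lt_div_iff₀ hs]; linarith
  have he : Real.exp 1 < 6 / (x - t) := by
    have := Real.exp_one_lt_d9
    linarith
  calc 1 = Real.log (Real.exp 1) := (Real.log_exp 1).symm
    _ < Real.log (6 / (x - t)) := Real.log_lt_log (Real.exp_pos 1) he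

private lemma hasDerivAt_L {t x : ℝ} (hx : x ∈ Set.Ioo t (t + 2)) :
    HasDerivAt (fun y => Real.log (6 / (y - t))) (-(1 / (x - t))) x := by
  have hs : 0 < x - t := by have := hx.1; linarith
  have h1 : HasDerivAt (fun y : ℝ => y - t) 1 x := (hasDerivAt_id x).sub_const t
  have h2 : HasDerivAt (fun y : ℝ => (y - t)⁻¹) (-1 / (x - t) ^ 2) x := by
    exact h1.inv (ne_of_gt hs)
  have h3 : HasDerivAt (fun y : ℝ => 6 / (y - t)) (6 * (-1 / (x - t) ^ 2)) x := by
    simpa [div_eq_mul_inv] using h2.const_mul 6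
  have h4 := h3.log (by positivity)
  convert h4 using 1
  field_simp

private lemma hasDerivAt_H {C β t x : ℝ} (hx : x ∈ Set.Ioo t (t + 2)) :
    HasDerivAt (fun y => 1 - C * Real.log (6 / (y - t)) ^ β)
      (C * β * Real.log (6 / (x - t)) ^ (β - 1) / (x - t)) x := by
  have hs : 0 < x - t := by have := hx.1; linarith
  have hL := logL_gt_one hx
  have h1 := (((hasDerivAt_L hx).rpow_const (p := β)
      (Or.inl (by linarith))).const_mul C).const_sub 1
  refine h1.congr_deriv ?_
  field_simp

private lemma hasDerivAt_D {C β t x : ℝ} (hx : x ∈ Set.Ioo t (t + 2)) :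
    HasDerivAt (fun y => C * β * Real.log (6 / (y - t)) ^ (β - 1) / (y - t))
      (-(C * β) * ((β - 1) * Real.log (6 / (x - t)) ^ (β - 2)
        + Real.log (6 / (x - t)) ^ (β - 1)) / (x - t) ^ 2) x := by
  have hs : 0 < x - t := by have := hx.1; linarith
  have hL := logL_gt_one hx
  have h1 := ((hasDerivAt_L hx).rpow_const (p := β - 1)
      (Or.inl (by linarith))).const_mul (C * β)
  have h2 : HasDerivAt (fun y : ℝ => (y - t)⁻¹) (-1 / (x - t) ^ 2) x := by
    exact ((hasDerivAt_id x).sub_const t).inv (ne_of_gt hs)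
  have h3 := h1.mul h2
  convert h3 using 1
  · rfl
  · rfl
  · funext y; simp [div_eq_mul_inv]
  have hrw : β - 1 - 1 = β - 2 := by ring
  rw [hrw] at h3 ⊢
  field_simp
  ring

/-- Properties of `h(t,·)` and the singularity curve `x = t + μ(t)`: for fixed `t > 0`, with
`H x = 1 - (2ε)^{p-1}(p-1) t (log (6/(x-t)))^{α(p-1)}` and
`μ = 6 exp(-((2ε)^{p-1}(p-1) t)^{-1/(α(p-1))}) < 2`, one has `∂_x H > 0` and `∂²_x H ≤ 0` on
`{x : x - t ∈ (0,2)}`, `H (t+μ) = 0`, and the concavity bound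
`H x ≤ ∂_x H (t+μ) (x - t - μ)` for `x - t ∈ (μ, 2)`. -/
theorem singularity_curve_properties
    (p : ℕ) (hp : 2 ≤ p) (ε α t : ℝ) (hε : 0 < ε) (hα : α ∈ Set.Ioo (0 : ℝ) 1)
    (ht : 0 < t)
    (H : ℝ → ℝ)
    (hH : ∀ x, H x =
      1 - (2 * ε) ^ (p - 1) * ((p : ℝ) - 1) * t
        * Real.log (6 / (x - t)) ^ (α * ((p : ℝ) - 1)))
    (μ : ℝ)
    (hμ : μ = 6 * Real.exp
      (-((2 * ε) ^ (p - 1) * ((p : ℝ) - 1) * t) ^ (-(1 / (α * ((p : ℝ) - 1))))))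
    (hμ2 : μ < 2) :
    (∀ x : ℝ, x - t ∈ Set.Ioo (0 : ℝ) 2 → 0 < deriv H x) ∧
    (∀ x : ℝ, x - t ∈ Set.Ioo (0 : ℝ) 2 → deriv (deriv H) x ≤ 0) ∧
    H (t + μ) = 0 ∧
    (∀ x : ℝ, x - t ∈ Set.Ioo μ 2 → H x ≤ deriv H (t + μ) * (x - t - μ)) := by
  obtain ⟨hα0, hα1⟩ := hα
  set C : ℝ := (2 * ε) ^ (p - 1) * ((p : ℝ) - 1) * t with hCdef
  set β : ℝ := α * ((p : ℝ) - 1) with hβdef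
  have hp2 : (2 : ℝ) ≤ (p : ℝ) := by exact_mod_cast hp
  have hC0 : 0 < C := by
    apply mul_pos (mul_pos (pow_pos (by linarith) _) (by linarith)) ht
  have hβ0 : 0 < β := mul_pos hα0 (by linarith)
  have HEq : H = fun x => 1 - C * Real.log (6 / (x - t)) ^ β := funext hH
  subst HEq
  set D : ℝ → ℝ := fun y => C * β * Real.log (6 / (y - t)) ^ (β - 1) / (y - t) with hDdef
  have hmem : ∀ x : ℝ, x - t ∈ Set.Ioo (0 : ℝ) 2 → x ∈ Set.Ioo t (t + 2) := by
    intro x hx; exact ⟨by linarith [hx.1], by linarith [hx.2]⟩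
  -- deriv H = D on Ioo
  have hderivH : ∀ x ∈ Set.Ioo t (t + 2),
      deriv (fun x => 1 - C * Real.log (6 / (x - t)) ^ β) x = D x := fun x hx =>
    (hasDerivAt_H hx).deriv
  have hDpos : ∀ x ∈ Set.Ioo t (t + 2), 0 < D x := by
    intro x hx
    have hs : 0 < x - t := by have := hx.1; linarith
    have hL : 0 < Real.log (6 / (x - t)) := lt_trans one_pos (logL_gt_one hx)
    exact div_pos (mul_pos (mul_pos hC0 hβ0) (Real.rpow_pos_of_pos hL _)) hs
  -- second derivative value nonpositive
  have hD2 : ∀ x ∈ Set.Ioo t (t + 2), deriv D x ≤ 0 := by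
    intro x hx
    rw [(hasDerivAt_D hx).deriv]
    have hs : 0 < x - t := by have := hx.1; linarith
    have hL1 := logL_gt_one hx
    have hL : 0 < Real.log (6 / (x - t)) := lt_trans one_pos hL1
    set L := Real.log (6 / (x - t))
    have hfac : (β - 1) * L ^ (β - 2) + L ^ (β - 1) = L ^ (β - 2) * (β - 1 + L) := by
      have : L ^ (β - 1) = L ^ (β - 2) * L := by
        rw [show β - 1 = (β - 2) + 1 by ring, Real.rpow_add hL, Real.rpow_one]
      rw [this]; ring
    apply div_nonpos_of_nonpos_of_nonneg _ (by positivity)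
    apply mul_nonpos_of_nonpos_of_nonneg (by nlinarith)
    rw [hfac]
    have := Real.rpow_pos_of_pos hL (β - 2)
    nlinarith
  have hμpos : 0 < μ := by rw [hμ]; positivity
  have haI : t + μ ∈ Set.Ioo t (t + 2) := ⟨by linarith, by linarith⟩
  -- part iii
  have hiii : (fun x => 1 - C * Real.log (6 / (x - t)) ^ β) (t + μ) = 0 := by
    have h6 : (6 : ℝ) / (t + μ - t) = Real.exp (C ^ (-(1 / β))) := by
      rw [show t + μ - t = μ by ring, hμ, Real.exp_neg]
      field_simp
    simp only [h6, Real.log_exp]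
    rw [← Real.rpow_mul hC0.le, show -(1 / β) * β = -1 by field_simp,
      Real.rpow_neg_one, mul_inv_cancel₀ (ne_of_gt hC0)]
    ring
  refine ⟨?_, ?_, hiii, ?_⟩
  · intro x hx
    rw [hderivH x (hmem x hx)]
    exact hDpos x (hmem x hx)
  · intro x hx
    have hxI := hmem x hx
    have hev : deriv (fun x => 1 - C * Real.log (6 / (x - t)) ^ β) =ᶠ[nhds x] D :=
      Filter.eventually_of_mem (isOpen_Ioo.mem_nhds hxI) (fun y hy => hderivH y hy)
    rw [hev.deriv_eq]
    exact hD2 x hxI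
  · intro x hx
    have hxI : x ∈ Set.Ioo t (t + 2) := ⟨by linarith [hx.1, hμpos], by linarith [hx.2]⟩
    have hax : t + μ < x := by linarith [hx.1]
    have hsub : Set.Icc (t + μ) x ⊆ Set.Ioo t (t + 2) := by
      intro y hy
      exact ⟨by linarith [hy.1], by linarith [hy.2, hxI.2]⟩
    have hcont : ContinuousOn (fun x => 1 - C * Real.log (6 / (x - t)) ^ β)
        (Set.Icc (t + μ) x) := fun y hy =>
      (hasDerivAt_H (hsub hy)).continuousAt.continuousWithinAt
    have hdrv : ∀ y ∈ Set.Ioo (t + μ) x,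
        HasDerivAt (fun x => 1 - C * Real.log (6 / (x - t)) ^ β) (D y) y := fun y hy =>
      hasDerivAt_H (hsub ⟨hy.1.le, hy.2.le⟩)
    obtain ⟨c, hc, hceq⟩ := exists_hasDerivAt_eq_slope _ D hax hcont hdrv
    have hcI : c ∈ Set.Ioo t (t + 2) := hsub ⟨hc.1.le, hc.2.le⟩
    -- D is antitone on Ioo t (t+2)
    have hanti : AntitoneOn D (Set.Ioo t (t + 2)) := by
      apply antitoneOn_of_deriv_nonpos (convex_Ioo _ _)
      · exact fun y hy => (hasDerivAt_D hy).continuousAt.continuousWithinAt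
      · rw [interior_Ioo]
        exact fun y hy => (hasDerivAt_D hy).differentiableAt.differentiableWithinAt
      · rw [interior_Ioo]
        exact hD2
    have hDca : D c ≤ D (t + μ) := hanti haI hcI hc.1.le
    have hHx : (fun x => 1 - C * Real.log (6 / (x - t)) ^ β) x = D c * (x - (t + μ)) := by
      have hne : x - (t + μ) ≠ 0 := by intro h; linarith [hx.1]
      have hiii' : 1 - C * Real.log (6 / (t + μ - t)) ^ β = 0 := hiii
      rw [hceq, hiii']
      field_simp
      ring
    rw [hderivH _ haI, hHx, show x - t - μ = x - (t + μ) by ring]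
    exact mul_le_mul_of_nonneg_right hDca (by linarith [hx.1])
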